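/- arXiv:1811.04335 — 2 statements merged into one kernel-verified Lean document; each statement's English description precedes it below -/
import Mathlib

section
/- If λ = iω with ω > 0 is a root of λ² + A λ + Bλe^{-λτ} + C + De^{-λτ} = 0 (A, B, C, D, τ real), then ω² satisfies (ω²)² + (A² - 2C - B²)ω² + (C² - D²) = 0. -/
open Complex

/-- If λ = iω (ω > 0) is a root of λ² + Aλ + Bλe^{-λτ} + C + De^{-λτ} = 0, then
ω² satisfies (ω²)² + (A² - 2C - B²)ω² + (C² - D²) = 0. -/
theorem imaginary_root_gives_quartic (A B C D τ ω : ℝ) (hω : 0 < ω)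
    (h : (Complex.I * ω) ^ 2 + (A : ℂ) * (Complex.I * ω)
        + (B : ℂ) * (Complex.I * ω) * Complex.exp (-(Complex.I * ω) * τ)
        + (C : ℂ) + (D : ℂ) * Complex.exp (-(Complex.I * ω) * τ) = 0) :
    (ω ^ 2) ^ 2 + (A ^ 2 - 2 * C - B ^ 2) * ω ^ 2 + (C ^ 2 - D ^ 2) = 0 := by
  have key : ((B : ℂ) * (Complex.I * ω) + D) * Complex.exp (-(Complex.I * ω) * τ)
      = -((Complex.I * ω) ^ 2 + (A : ℂ) * (Complex.I * ω) + C) := by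
    linear_combination h
  have hns := congrArg Complex.normSq key
  rw [Complex.normSq_mul] at hns
  have h1 : Complex.normSq (Complex.exp (-(Complex.I * ω) * τ)) = 1 := by
    rw [Complex.normSq_eq_norm_sq, Complex.norm_exp]
    simp
  rw [h1, mul_one] at hns
  simp only [Complex.normSq_apply, Complex.add_re, Complex.add_im, Complex.mul_re,
    Complex.mul_im, Complex.I_re, Complex.I_im, Complex.ofReal_re, Complex.ofReal_im,
    Complex.neg_re, Complex.neg_im, pow_two] at hns
  nlinarith [hns]
end

section
/- Solutions c, s of the system D c + Bω s = ω² - C, -D s + Bω c = -Aω (with D² + B²ω² ≠ 0) satisfy c² + s² = 1 if and only if (ω²)² + (A² - 2C - B²)ω² + C² - D² = 0. -/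
/-- The solutions c, s of the linear system satisfy c² + s² = 1 iff ω² solves the
quartic (ω²)² + (A² - 2C - B²)ω² + C² - D² = 0. -/
theorem solutions_on_unit_circle_iff_quartic (A B C D ω : ℝ) (hω : 0 < ω)
    (hden : D ^ 2 + B ^ 2 * ω ^ 2 ≠ 0) (c s : ℝ)
    (h1 : D * c + B * ω * s = ω ^ 2 - C)
    (h2 : -D * s + B * ω * c = -A * ω) :
    c ^ 2 + s ^ 2 = 1 ↔
      (ω ^ 2) ^ 2 + (A ^ 2 - 2 * C - B ^ 2) * ω ^ 2 + C ^ 2 - D ^ 2 = 0 := by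
  have key : (c ^ 2 + s ^ 2) * (D ^ 2 + B ^ 2 * ω ^ 2) =
      (ω ^ 2 - C) ^ 2 + A ^ 2 * ω ^ 2 := by linear_combination (D*c + B*ω*s + (ω^2 - C))*h1 + (-D*s + B*ω*c + (-A*ω))*h2
  constructor
  · intro h; linear_combination (D ^ 2 + B ^ 2 * ω ^ 2) * h - key
  · intro h
    have h' : (c ^ 2 + s ^ 2) * (D ^ 2 + B ^ 2 * ω ^ 2) = 1 * (D ^ 2 + B ^ 2 * ω ^ 2) := by
      linear_combination key + h
    exact mul_right_cancel₀ hden h'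
end
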